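/- arXiv:1911.08380 — 5 statements merged into one kernel-verified Lean document; each statement's English description precedes it below -/
import Mathlib

section
/- Let f : ℝ^n → ℝ satisfy the quadratic upper bound f(y) ≤ f(x) + ⟨∇f(x), y−x⟩ + (L/2)‖y−x‖² for all x, y, with L > 0. Let g ∈ ℝ^n and x' = x − (1/(2L))·g. Then f(x') − f(x) ≤ −(1/(4L))‖g‖² + (1/(2L))‖g − ∇f(x)‖². -/
open RealInnerProductSpace

theorem sgd_one_step_decrease (n : ℕ) (f : EuclideanSpace ℝ (Fin n) → ℝ)
    (grad : EuclideanSpace ℝ (Fin n) → EuclideanSpace ℝ (Fin n))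
    (L : ℝ) (hL : 0 < L)
    (hsmooth : ∀ x y, f y ≤ f x + ⟪grad x, y - x⟫ + (L / 2) * ‖y - x‖ ^ 2)
    (x g : EuclideanSpace ℝ (Fin n)) :
    f (x - (1 / (2 * L)) • g) - f x ≤
      -(1 / (4 * L)) * ‖g‖ ^ 2 + (1 / (2 * L)) * ‖g - grad x‖ ^ 2 := by
  have h := hsmooth x (x - (1 / (2 * L)) • g)
  have hx : x - (1 / (2 * L)) • g - x = -((1 / (2 * L)) • g) := by abel
  rw [hx] at h
  rw [inner_neg_right, inner_smul_right, norm_neg, norm_smul] at h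
  have h1 : ‖g - grad x‖ ^ 2 = ‖g‖ ^ 2 - 2 * ⟪g, grad x⟫ + ‖grad x‖ ^ 2 := by
    rw [norm_sub_sq_real]
  have h2 : (0:ℝ) ≤ ‖grad x - (1/2 : ℝ) • g‖ ^ 2 := sq_nonneg _
  have h3 : ‖grad x - (1/2 : ℝ) • g‖ ^ 2
      = ‖grad x‖ ^ 2 - ⟪g, grad x⟫ + (1/4) * ‖g‖ ^ 2 := by
    rw [norm_sub_sq_real, inner_smul_right, norm_smul, real_inner_comm]
    simp
    ring
  have hcomm : ⟪grad x, g⟫ = ⟪g, grad x⟫ := real_inner_comm _ _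
  rw [hcomm] at h
  have hLn : ‖(1 / (2 * L) : ℝ)‖ = 1 / (2 * L) := by
    rw [Real.norm_eq_abs, abs_of_pos]; positivity
  rw [hLn] at h
  rw [h3] at h2
  have hh : L / 2 * (1 / (2 * L) * ‖g‖) ^ 2 = (1 / (8 * L)) * ‖g‖ ^ 2 := by
    field_simp; ring
  rw [hh] at h
  have e1 : (1:ℝ) / (4 * L) = 2 * (1 / (8 * L)) := by field_simp; ring
  have e2 : (1:ℝ) / (2 * L) = 4 * (1 / (8 * L)) := by field_simp; ring
  rw [e2] at h
  rw [e1, e2]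
  have key := mul_nonneg (show (0:ℝ) ≤ 1/(8*L) by positivity) h2
  have h1' : (1/(8*L)) * ‖g - grad x‖^2 = (1/(8*L)) * (‖g‖^2 - 2*⟪g, grad x⟫ + ‖grad x‖^2) := by rw [h1]
  linarith [key, h, h1']
end

section
/- Let f : ℝ^n → ℝ satisfy f(y) ≤ f(x) + ⟨∇f(x), y−x⟩ + (L/2)‖y−x‖² for all x, y, with L > 0. Let g ∈ ℝ^n and x' = x − (1/(2L))g. Then f(x') − f(x) ≤ −(1/(8L))‖∇f(x)‖² + (3/(4L))‖g − ∇f(x)‖². -/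
open RealInnerProductSpace

theorem nonconvex_sgd_one_step (n : ℕ) (f : EuclideanSpace ℝ (Fin n) → ℝ)
    (grad : EuclideanSpace ℝ (Fin n) → EuclideanSpace ℝ (Fin n))
    (L : ℝ) (hL : 0 < L)
    (hsmooth : ∀ x y, f y ≤ f x + ⟪grad x, y - x⟫ + (L / 2) * ‖y - x‖ ^ 2)
    (x g : EuclideanSpace ℝ (Fin n)) :
    f (x - (1 / (2 * L)) • g) - f x ≤
      -(1 / (8 * L)) * ‖grad x‖ ^ 2 + (3 / (4 * L)) * ‖g - grad x‖ ^ 2 := by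
  have h := hsmooth x (x - (1 / (2 * L)) • g)
  have hsub : x - (1 / (2 * L)) • g - x = -((1 / (2 * L)) • g) := by abel
  rw [hsub] at h
  have hip : ⟪grad x, -((1 / (2 * L)) • g)⟫ = -(1 / (2 * L)) * ⟪grad x, g⟫ := by
    rw [inner_neg_right, real_inner_smul_right]; ring
  have hn : ‖-((1 / (2 * L)) • g)‖ ^ 2 = (1 / (2 * L)) ^ 2 * ‖g‖ ^ 2 := by
    rw [norm_neg, norm_smul]
    have : |(1 / (2 * L))| = 1 / (2 * L) := abs_of_pos (by positivity)
    simp [Real.norm_eq_abs, this, mul_pow]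
  rw [hip, hn] at h
  -- expand g = grad x + (g - grad x)
  have hg : g = grad x + (g - grad x) := by abel
  have hnormg : ‖g‖ ^ 2 = ‖grad x‖ ^ 2 + 2 * ⟪grad x, g - grad x⟫ + ‖g - grad x‖ ^ 2 := by
    conv_lhs => rw [hg]
    rw [norm_add_sq_real]
  have hipg : ⟪grad x, g⟫ = ‖grad x‖ ^ 2 + ⟪grad x, g - grad x⟫ := by
    conv_lhs => rw [hg]
    rw [inner_add_right, real_inner_self_eq_norm_sq]
  rw [hnormg, hipg] at h
  have hcs : |⟪grad x, g - grad x⟫| ≤ ‖grad x‖ * ‖g - grad x‖ := abs_real_inner_le_norm _ _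
  have h1 : -⟪grad x, g - grad x⟫ ≤ ‖grad x‖ * ‖g - grad x‖ := by
    have := neg_abs_le ⟪grad x, g - grad x⟫; linarith
  have hLne : L ≠ 0 := ne_of_gt hL
  have hkey : ‖grad x‖ * ‖g - grad x‖ ≤ (‖grad x‖ ^ 2 + ‖g - grad x‖ ^ 2) / 2 := by
    nlinarith [sq_nonneg (‖grad x‖ - ‖g - grad x‖)]
  set c := 1 / L with hc
  have hcpos : 0 < c := by positivity
  have e1 : 1 / (2 * L) = c / 2 := by rw [hc]; field_simp
  have e2 : 1 / (8 * L) = c / 8 := by rw [hc]; field_simp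
  have e3 : 3 / (4 * L) = 3 * c / 4 := by rw [hc]; field_simp
  have e4 : L / 2 * ((c / 2) ^ 2 *
      (‖grad x‖ ^ 2 + 2 * ⟪grad x, g - grad x⟫ + ‖g - grad x‖ ^ 2)) =
      c / 8 * (‖grad x‖ ^ 2 + 2 * ⟪grad x, g - grad x⟫ + ‖g - grad x‖ ^ 2) := by
    rw [hc]; field_simp; ring
  rw [e1] at h
  rw [e1, e2, e3]
  nlinarith [h, e4, mul_le_mul_of_nonneg_left h1 (le_of_lt hcpos),
    mul_le_mul_of_nonneg_left hkey (le_of_lt hcpos),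
    mul_nonneg (le_of_lt hcpos) (sq_nonneg ‖g - grad x‖),
    mul_nonneg (le_of_lt hcpos) (sq_nonneg ‖grad x‖)]
end

section
/- Let f : ℝ^n → ℝ be convex and differentiable with L-Lipschitz gradient (in the quadratic upper bound sense), let g ∈ ℝ^n, let x⁺ = x − (1/(2L))g, and let δ² = ‖g − ∇f(x)‖². Then for every z ∈ ℝ^n, ⟨g, x − z⟩ ≤ f(x) − f(x⁺) + L‖x − z‖² − L‖x⁺ − z‖² + δ²/(2L). -/
open RealInnerProductSpace

theorem convex_sgd_key_inequality (n : ℕ) (f : EuclideanSpace ℝ (Fin n) → ℝ)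
    (grad : EuclideanSpace ℝ (Fin n) → EuclideanSpace ℝ (Fin n))
    (hdiff : ∀ x, HasGradientAt f (grad x) x)
    (hconv : ConvexOn ℝ Set.univ f)
    (L : ℝ) (hL : 0 < L)
    (hsmooth : ∀ x y, f y ≤ f x + ⟪grad x, y - x⟫ + (L / 2) * ‖y - x‖ ^ 2)
    (x g : EuclideanSpace ℝ (Fin n)) :
    ∀ z : EuclideanSpace ℝ (Fin n),
      ⟪g, x - z⟫ ≤ f x - f (x - (1 / (2 * L)) • g) + L * ‖x - z‖ ^ 2
        - L * ‖x - (1 / (2 * L)) • g - z‖ ^ 2 + ‖g - grad x‖ ^ 2 / (2 * L) := by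
  intro z
  obtain ⟨c, hc⟩ : ∃ c : ℝ, c = 1 / (2 * L) := ⟨_, rfl⟩
  rw [← hc]
  have key := hsmooth x (x - c • g)
  have e1 : (x - c • g) - x = -(c • g) := by abel
  rw [e1] at key
  have e2 : ⟪grad x, -(c • g)⟫ = -(c * ⟪grad x, g⟫) := by
    rw [inner_neg_right, real_inner_smul_right]
  have e3 : ‖-(c • g)‖ ^ 2 = c ^ 2 * ‖g‖ ^ 2 := by
    rw [norm_neg, norm_smul, mul_pow, Real.norm_eq_abs, sq_abs]
  rw [e2, e3] at key
  have e4 : x - c • g - z = (x - z) - c • g := by abel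
  have h1 : ‖x - c • g - z‖ ^ 2
      = ‖x - z‖ ^ 2 - 2 * (c * ⟪x - z, g⟫) + c ^ 2 * ‖g‖ ^ 2 := by
    rw [e4, norm_sub_sq_real, real_inner_smul_right, norm_smul, mul_pow,
      Real.norm_eq_abs, sq_abs]
  have h2 : ‖g - grad x‖ ^ 2
      = ‖g‖ ^ 2 - 2 * ⟪g, grad x⟫ + ‖grad x‖ ^ 2 := by
    rw [norm_sub_sq_real]
  have h3 : (0:ℝ) ≤ ‖grad x - (1/2 : ℝ) • g‖ ^ 2 := sq_nonneg _
  have h4 : ‖grad x - (1/2 : ℝ) • g‖ ^ 2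
      = ‖grad x‖ ^ 2 - ⟪grad x, g⟫ + (1/4) * ‖g‖ ^ 2 := by
    rw [norm_sub_sq_real, real_inner_smul_right, norm_smul, mul_pow,
      Real.norm_eq_abs, sq_abs]
    ring
  rw [h4] at h3
  have hsym : ⟪g, grad x⟫ = ⟪grad x, g⟫ := real_inner_comm _ _
  have hsym2 : ⟪g, x - z⟫ = ⟪x - z, g⟫ := real_inner_comm _ _
  rw [h1, h2, hsym, hsym2]
  subst hc
  set p : ℝ := ⟪grad x, g⟫ with hp
  set G : ℝ := ‖g‖ ^ 2 with hG
  set q : ℝ := ‖grad x‖ ^ 2 with hq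
  have keyeq : f x + -(1 / (2 * L) * p) + L / 2 * ((1 / (2 * L)) ^ 2 * G)
      = f x - p / (2 * L) + G / (8 * L) := by
    field_simp
    ring
  rw [keyeq] at key
  rw [← sub_nonneg]
  have expand : f x - f (x - (1 / (2 * L)) • g) + L * ‖x - z‖ ^ 2
      - L * (‖x - z‖ ^ 2 - 2 * (1 / (2 * L) * ⟪x - z, g⟫) + (1 / (2 * L)) ^ 2 * G)
      + (G - 2 * p + q) / (2 * L) - ⟪x - z, g⟫
      = (f x - f (x - (1 / (2 * L)) • g) - p / (2 * L) + G / (8 * L))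
        + (q - p + (1/4) * G) / (2 * L) := by
    field_simp
    ring
  rw [expand]
  have t1 : (0:ℝ) ≤ f x - f (x - (1 / (2 * L)) • g) - p / (2 * L) + G / (8 * L) := by
    linarith
  have t2 : (0:ℝ) ≤ (q - p + (1/4) * G) / (2 * L) := by
    apply div_nonneg h3 (by positivity)
  linarith
end

section
/- Let A_0 = 0 and suppose for each k ≥ 1, A_k = A_{k−1} + α_k where α_k = (1 + √(1 + 4 A_{k−1} L_k))/(2 L_k) and each L_k satisfies 0 < L_k ≤ L̄. Then A_N ≥ N²/(4 L̄) for all N ≥ 1. -/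
theorem accelerated_A_growth (A : ℕ → ℝ) (L : ℕ → ℝ) (Lbar : ℝ)
    (hA0 : A 0 = 0)
    (hL : ∀ k, 0 < L k ∧ L k ≤ Lbar)
    (hrec : ∀ k : ℕ,
      A (k + 1) = A k + (1 + Real.sqrt (1 + 4 * A k * L (k + 1))) / (2 * L (k + 1))) :
    ∀ N : ℕ, 1 ≤ N → A N ≥ (N : ℝ) ^ 2 / (4 * Lbar) := by
  have hLbar : 0 < Lbar := lt_of_lt_of_le (hL 0).1 (hL 0).2
  have key : ∀ k : ℕ, A k ≥ (k : ℝ) ^ 2 / (4 * Lbar) := by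
    intro k
    induction k with
    | zero => simp [hA0]
    | succ k ih =>
      obtain ⟨hLpos, hLle⟩ := hL (k + 1)
      set Lk := L (k + 1)
      have hAk : 0 ≤ A k := le_trans (by positivity) ih
      have ih' : (k : ℝ) ^ 2 ≤ 4 * Lbar * A k := by
        rw [ge_iff_le, div_le_iff₀ (by positivity)] at ih
        linarith
      -- sqrt lower bound: √(1+4AL) ≥ k·L/Lbar
      have hs : (k : ℝ) * Lk / Lbar ≤ Real.sqrt (1 + 4 * A k * Lk) := by
        apply Real.le_sqrt_of_sq_le
        rw [div_pow, div_le_iff₀ (by positivity)]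
        nlinarith [mul_le_mul_of_nonneg_right ih' (sq_nonneg Lk),
          mul_nonneg (mul_nonneg (mul_nonneg (by norm_num : (0:ℝ) ≤ 4) hLbar.le)
            (mul_nonneg hAk hLpos.le)) (sub_nonneg.mpr hLle), sq_nonneg Lbar]
      have hinc : (1 + Real.sqrt (1 + 4 * A k * Lk)) / (2 * Lk)
          ≥ (2 * (k : ℝ) + 2) / (4 * Lbar) := by
        rw [ge_iff_le, div_le_div_iff₀ (by positivity) (by positivity)]
        have h1 : 1 + (k : ℝ) * Lk / Lbar ≤ 1 + Real.sqrt (1 + 4 * A k * Lk) := by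
          linarith
        have h2 : (1 + (k : ℝ) * Lk / Lbar) * (4 * Lbar)
            = 4 * Lbar + 4 * (k : ℝ) * Lk := by
          field_simp
        nlinarith [mul_le_mul_of_nonneg_right h1 (by positivity : (0:ℝ) ≤ 4 * Lbar),
          mul_nonneg (Nat.cast_nonneg k : (0:ℝ) ≤ k) hLpos.le]
      rw [hrec k]
      push_cast
      have : ((k : ℝ) + 1) ^ 2 / (4 * Lbar)
          ≤ (k : ℝ) ^ 2 / (4 * Lbar) + (2 * (k : ℝ) + 2) / (4 * Lbar) := by
        rw [← add_div, div_le_div_iff₀ (by positivity) (by positivity)]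
        nlinarith
      linarith
  intro N hN
  exact key N
end

section
/- Accelerated one-step estimate (Lemma 5 of the paper): Let f be differentiable, and on one iteration let y = (α u + A x_prev)/(A+α), u⁺ = u − α g where g = ∇^r f(y) is any vector, and x⁺ = (α u⁺ + A x_prev)/(A+α), with A⁺ = A + α and L α² = A⁺. Write l(x) = f(y) + ⟨g, x − y⟩. Then for all x ∈ ℝ^n: l(x⁺) + (L/2)‖x⁺ − y‖² ≤ (A/A⁺) l(x_prev) + (α/A⁺)( l(x) + (1/(2α))‖x − u‖² − (1/(2α))‖x − u⁺‖² ). -/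
open RealInnerProductSpace

theorem accelerated_one_step_estimate (n : ℕ) (f : EuclideanSpace ℝ (Fin n) → ℝ)
    (hdiff : Differentiable ℝ f)
    (g u xprev : EuclideanSpace ℝ (Fin n)) (α A Aplus L : ℝ)
    (hα : 0 < α) (hA : 0 ≤ A) (hAplus : Aplus = A + α) (hL : L * α ^ 2 = Aplus)
    (y uplus xplus : EuclideanSpace ℝ (Fin n))
    (hy : y = Aplus⁻¹ • (α • u + A • xprev))
    (huplus : uplus = u - α • g)
    (hxplus : xplus = Aplus⁻¹ • (α • uplus + A • xprev)) :
    ∀ x : EuclideanSpace ℝ (Fin n),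
      (f y + ⟪g, xplus - y⟫) + (L / 2) * ‖xplus - y‖ ^ 2 ≤
        (A / Aplus) * (f y + ⟪g, xprev - y⟫) +
          (α / Aplus) * ((f y + ⟪g, x - y⟫)
            + (1 / (2 * α)) * ‖x - u‖ ^ 2 - (1 / (2 * α)) * ‖x - uplus‖ ^ 2) := by
  intro x
  subst hAplus hy huplus hxplus
  have hAp : (0:ℝ) < A + α := by linarith
  have hAp' : (A + α) ≠ 0 := ne_of_gt hAp
  have hα' : α ≠ 0 := ne_of_gt hα
  have h1 : (A + α)⁻¹ • (α • (u - α • g) + A • xprev) - (A + α)⁻¹ • (α • u + A • xprev)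
      = (-(α^2/(A+α))) • g := by
    match_scalars <;> (field_simp; try ring) <;> tauto
  have h2 : xprev - (A + α)⁻¹ • (α • u + A • xprev) = (α/(A+α)) • (xprev - u) := by
    match_scalars <;> (field_simp; try ring) <;> tauto
  have h3 : x - (A + α)⁻¹ • (α • u + A • xprev) = (x - u) - (A/(A+α)) • (xprev - u) := by
    match_scalars <;> (field_simp; try ring) <;> tauto
  have h4 : x - (u - α • g) = (x - u) + α • g := by module
  rw [h1, h2, h3, h4]
  have hLval : L = (A + α) / α^2 := by
    field_simp at hL ⊢; linarith
  rw [hLval]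
  have e1 : ⟪g, (-(α^2/(A+α))) • g⟫ = (-(α^2/(A+α))) * ‖g‖^2 := by
    rw [real_inner_smul_right, real_inner_self_eq_norm_sq]
  have e2 : ⟪g, (α/(A+α)) • (xprev - u)⟫ = (α/(A+α)) * ⟪g, xprev - u⟫ := by
    rw [real_inner_smul_right]
  have e3 : ⟪g, (x - u) - (A/(A+α)) • (xprev - u)⟫
      = ⟪g, x - u⟫ - (A/(A+α)) * ⟪g, xprev - u⟫ := by
    rw [inner_sub_right, real_inner_smul_right]
  have e4 : ‖(-(α^2/(A+α))) • g‖^2 = (α^2/(A+α))^2 * ‖g‖^2 := by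
    rw [norm_smul]
    rw [Real.norm_eq_abs]
    rw [mul_pow, sq_abs]
    ring
  have e5 : ‖(x - u) + α • g‖^2 = ‖x - u‖^2 + 2 * (α * ⟪g, x - u⟫) + α^2 * ‖g‖^2 := by
    rw [norm_add_sq_real, real_inner_smul_right, norm_smul, Real.norm_eq_abs, mul_pow, sq_abs,
      real_inner_comm]
  rw [e1, e2, e3, e4, e5]
  apply le_of_eq
  field_simp
  ring
end
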